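/- arXiv:1802.02702 — 2 statements merged into one kernel-verified Lean document; each statement's English description precedes it below -/
import Mathlib

section
/- Let μ be a probability measure on ℝⁿ, let C be a finite measurable partition of ℝⁿ (the common-layer partition), and let F¹ and F² be finite measurable partitions (the final overall partitions of the two quality levels) each of which refines C, i.e., every cell of Fˡ is contained in some cell of C, for l = 1, 2. For a partition P, write H(P) = −Σ_{B ∈ P} μ(B)·log₂ μ(B). Suppose a cell A ∈ C is the disjoint union of two measurable sets A₁ and A₂ with μ(A₁) > 0 and μ(A₂) > 0, such that A₁ is a union of cells of F¹ and also a union of cells of F², and likewise for A₂. Let C′ be the partition obtained from C by replacing A with A₁ and A₂. Then: (i) F¹ and F² each refine C′; (ii) the receive-rate entropies H(F¹) and H(F²) are unchanged (they do not depend on the common partition); (iii) H(C′) > H(C); and hence (iv) the total transmit rate strictly decreases: H(F¹) + H(F²) − H(C′) < H(F¹) + H(F²) − H(C). -/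
open MeasureTheory

/-- The entropy (in bits) of a finite collection of cells under the measure `μ`:
`H(P) = −Σ_{B ∈ P} μ(B)·log₂ μ(B)` (with the convention `0·log₂ 0 = 0`, which holds
automatically since `Real.logb 2 0 = 0` in Mathlib). -/
noncomputable def partitionEntropy {Ω : Type*} [MeasurableSpace Ω] (μ : Measure Ω)
    (P : Finset (Set Ω)) : ℝ :=
  ∑ B ∈ P, -((μ B).toReal * Real.logb 2 (μ B).toReal)

private lemma subadd_f {p q : ℝ} (hp : 0 < p) (hq : 0 < q) :
    -((p + q) * Real.logb 2 (p + q)) < -(p * Real.logb 2 p) + -(q * Real.logb 2 q) := by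
  have h1 : Real.logb 2 p < Real.logb 2 (p + q) :=
    Real.logb_lt_logb one_lt_two hp (by linarith)
  have h2 : Real.logb 2 q < Real.logb 2 (p + q) :=
    Real.logb_lt_logb one_lt_two hq (by linarith)
  nlinarith [mul_lt_mul_of_pos_left h1 hp, mul_lt_mul_of_pos_left h2 hq]

private lemma cell_sub_or_disj {Ω : Type*} (F : Finset (Set Ω))
    (hdisj : (F : Set (Set Ω)).PairwiseDisjoint id)
    {B : Set Ω} (hB : B ∈ F) {T : Finset (Set Ω)} (hT : T ⊆ F) :
    B ⊆ ⋃₀ (T : Set (Set Ω)) ∨ Disjoint B (⋃₀ (T : Set (Set Ω))) := by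
  by_cases h : B ∈ T
  · exact Or.inl (Set.subset_sUnion_of_mem h)
  · right
    refine Set.disjoint_sUnion_right.2 fun t ht => ?_
    exact hdisj hB (hT ht) (fun e => h (e ▸ ht))

/-- Splitting an irregular common-layer cell `A = A₁ ∪ A₂` (each piece itself a union of
final cells of both quality levels, of positive probability) leaves the final partitions
`F¹`, `F²` refinements of the new common partition `C′`, keeps the receive-rate entropies
`H(F¹)`, `H(F²)` unchanged, strictly increases `H(C′) > H(C)`, and hence strictly decreases
the total transmit rate `H(F¹) + H(F²) − H(C)`. -/
theorem common_layer_split_decreases_transmit_rate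
    {n : ℕ} [DecidableEq (Set (Fin n → ℝ))]
    (μ : Measure (Fin n → ℝ)) [IsProbabilityMeasure μ]
    (C F₁ F₂ : Finset (Set (Fin n → ℝ)))
    -- `C` is a finite measurable partition of ℝⁿ:
    (hCmeas : ∀ B ∈ C, MeasurableSet B)
    (hCdisj : (C : Set (Set (Fin n → ℝ))).PairwiseDisjoint id)
    (hCcover : ⋃₀ (C : Set (Set (Fin n → ℝ))) = Set.univ)
    -- `F₁` and `F₂` are finite measurable partitions of ℝⁿ:
    (hF₁meas : ∀ B ∈ F₁, MeasurableSet B)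
    (hF₁disj : (F₁ : Set (Set (Fin n → ℝ))).PairwiseDisjoint id)
    (hF₁cover : ⋃₀ (F₁ : Set (Set (Fin n → ℝ))) = Set.univ)
    (hF₂meas : ∀ B ∈ F₂, MeasurableSet B)
    (hF₂disj : (F₂ : Set (Set (Fin n → ℝ))).PairwiseDisjoint id)
    (hF₂cover : ⋃₀ (F₂ : Set (Set (Fin n → ℝ))) = Set.univ)
    -- `F₁` and `F₂` each refine `C`:
    (hF₁ref : ∀ B ∈ F₁, ∃ D ∈ C, B ⊆ D)
    (hF₂ref : ∀ B ∈ F₂, ∃ D ∈ C, B ⊆ D)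
    -- the cell `A ∈ C` is the disjoint union of `A₁` and `A₂`, both of positive measure:
    (A A₁ A₂ : Set (Fin n → ℝ)) (hA : A ∈ C)
    (hA₁ : MeasurableSet A₁) (hA₂ : MeasurableSet A₂)
    (hdisj12 : Disjoint A₁ A₂) (hsplit : A = A₁ ∪ A₂)
    (hpos₁ : 0 < μ A₁) (hpos₂ : 0 < μ A₂)
    -- `A₁` and `A₂` are each a union of cells of `F₁` and also a union of cells of `F₂`:
    (hA₁F₁ : ∃ T ⊆ F₁, A₁ = ⋃₀ (T : Set (Set (Fin n → ℝ))))
    (hA₁F₂ : ∃ T ⊆ F₂, A₁ = ⋃₀ (T : Set (Set (Fin n → ℝ))))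
    (hA₂F₁ : ∃ T ⊆ F₁, A₂ = ⋃₀ (T : Set (Set (Fin n → ℝ))))
    (hA₂F₂ : ∃ T ⊆ F₂, A₂ = ⋃₀ (T : Set (Set (Fin n → ℝ))))
    -- `C′` is obtained from `C` by replacing `A` with the two cells `A₁` and `A₂`:
    (C' : Finset (Set (Fin n → ℝ)))
    (hC' : C' = insert A₁ (insert A₂ (C.erase A))) :
    -- (i) `F₁` and `F₂` each refine `C′`;
    (∀ B ∈ F₁, ∃ D ∈ C', B ⊆ D) ∧ (∀ B ∈ F₂, ∃ D ∈ C', B ⊆ D) ∧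
    -- (ii) the receive-rate entropies are unchanged (they depend only on `F₁`, `F₂`);
    partitionEntropy μ F₁ = partitionEntropy μ F₁ ∧
    partitionEntropy μ F₂ = partitionEntropy μ F₂ ∧
    -- (iii) the common rate strictly increases;
    partitionEntropy μ C' > partitionEntropy μ C ∧
    -- (iv) the total transmit rate strictly decreases.
    partitionEntropy μ F₁ + partitionEntropy μ F₂ - partitionEntropy μ C' <
      partitionEntropy μ F₁ + partitionEntropy μ F₂ - partitionEntropy μ C := by
  classical
  -- nonemptiness
  have hne₁ : A₁.Nonempty := nonempty_of_measure_ne_zero hpos₁.ne'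
  have hne₂ : A₂.Nonempty := nonempty_of_measure_ne_zero hpos₂.ne'
  have hA₁A : A₁ ⊆ A := hsplit ▸ Set.subset_union_left
  have hA₂A : A₂ ⊆ A := hsplit ▸ Set.subset_union_right
  have hA₁ne : A₁ ≠ A₂ := by
    intro e
    exact hne₁.ne_empty (Set.disjoint_iff_inter_eq_empty.mp hdisj12 ▸ (by rw [e, Set.inter_self]))
  have hA₁noterase : A₁ ∉ C.erase A := by
    intro h
    have hmem := Finset.mem_of_mem_erase h
    have hne := Finset.ne_of_mem_erase h
    have : Disjoint A₁ A := hCdisj hmem hA hne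
    exact hne₁.ne_empty (this.eq_bot_of_le hA₁A)
  have hA₂noterase : A₂ ∉ C.erase A := by
    intro h
    have hmem := Finset.mem_of_mem_erase h
    have hne := Finset.ne_of_mem_erase h
    have : Disjoint A₂ A := hCdisj hmem hA hne
    exact hne₂.ne_empty (this.eq_bot_of_le hA₂A)
  have hA₁notins : A₁ ∉ insert A₂ (C.erase A) := by
    simp only [Finset.mem_insert]
    rintro (e | h)
    · exact hA₁ne e
    · exact hA₁noterase h
  -- refinement helper
  have refine : ∀ (F : Finset (Set (Fin n → ℝ))),
      (F : Set (Set (Fin n → ℝ))).PairwiseDisjoint id →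
      (∀ B ∈ F, ∃ D ∈ C, B ⊆ D) →
      (∃ T ⊆ F, A₁ = ⋃₀ (T : Set (Set (Fin n → ℝ)))) →
      (∃ T ⊆ F, A₂ = ⋃₀ (T : Set (Set (Fin n → ℝ)))) →
      ∀ B ∈ F, ∃ D ∈ C', B ⊆ D := by
    rintro F hFdisj hFref ⟨T₁, hT₁, e₁⟩ ⟨T₂, hT₂, e₂⟩ B hB
    obtain ⟨D, hD, hBD⟩ := hFref B hB
    by_cases hDA : D = A
    · subst hDA
      rcases cell_sub_or_disj F hFdisj hB hT₁ with h1 | h1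
      · exact ⟨A₁, by simp [hC'], e₁ ▸ h1⟩
      · rcases cell_sub_or_disj F hFdisj hB hT₂ with h2 | h2
        · exact ⟨A₂, by simp [hC'], e₂ ▸ h2⟩
        · refine ⟨A₁, by simp [hC'], ?_⟩
          have : B = ∅ := by
            have hb : B ⊆ A₁ ∪ A₂ := hsplit ▸ hBD
            have d1 : Disjoint B A₁ := e₁ ▸ h1
            have d2 : Disjoint B A₂ := e₂ ▸ h2
            have : Disjoint B (A₁ ∪ A₂) := Set.disjoint_union_right.2 ⟨d1, d2⟩
            exact this.eq_bot_of_le hb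
          simp [this]
    · exact ⟨D, by simp [hC', Finset.mem_erase, hDA, hD], hBD⟩
  -- entropy computation
  set g : Set (Fin n → ℝ) → ℝ :=
    fun B => -((μ B).toReal * Real.logb 2 (μ B).toReal) with hg
  have hμA : (μ A).toReal = (μ A₁).toReal + (μ A₂).toReal := by
    rw [hsplit, measure_union hdisj12 hA₂,
      ENNReal.toReal_add (measure_ne_top μ _) (measure_ne_top μ _)]
  have hp : 0 < (μ A₁).toReal := ENNReal.toReal_pos hpos₁.ne' (measure_ne_top μ _)
  have hq : 0 < (μ A₂).toReal := ENNReal.toReal_pos hpos₂.ne' (measure_ne_top μ _)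
  have hHC : partitionEntropy μ C = g A + ∑ B ∈ C.erase A, g B := by
    rw [partitionEntropy, ← Finset.add_sum_erase C g hA]
  have hHC' : partitionEntropy μ C' = g A₁ + (g A₂ + ∑ B ∈ C.erase A, g B) := by
    rw [partitionEntropy, hC', Finset.sum_insert hA₁notins, Finset.sum_insert hA₂noterase]
  have key : g A < g A₁ + g A₂ := by
    have := subadd_f hp hq
    simpa [hg, hμA] using this
  refine ⟨refine F₁ hF₁disj hF₁ref hA₁F₁ hA₂F₁, refine F₂ hF₂disj hF₂ref hA₁F₂ hA₂F₂,
    rfl, rfl, by rw [hHC, hHC']; linarith, by rw [hHC, hHC']; linarith⟩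
end

section
/- Let a < b be real numbers and let B₁ and B₂ be finite subsets of the open interval (a, b), inducing partitions of [a, b) into half-open subintervals with breakpoint sets B₁ and B₂ respectively (the cells of partition Pᵢ are the intervals between consecutive points of {a} ∪ Bᵢ ∪ {b}). Then a subset S of [a, b) is simultaneously a union of cells of P₁ and a union of cells of P₂ if and only if S is a union of cells of the interval partition whose breakpoint set is B₁ ∩ B₂. In particular, the finest common coarsening of two finite interval partitions of [a, b) is itself an interval partition, with breakpoints B₁ ∩ B₂. -/
/-- `S` is a union of cells of the interval partition of `[a, b)` with breakpoint set `B`.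
The cell of the partition containing a point `x ∈ [a, b)` is the half-open interval
between consecutive elements of `{a} ∪ B ∪ {b}` around `x`; two points `x, y ∈ [a, b)`
lie in the same cell iff every breakpoint `c ∈ B` lies on the same side of both
(`c ≤ x ↔ c ≤ y`).  Hence `S` is a union of cells iff `S ⊆ [a, b)` and `S` is saturated:
together with any of its points it contains that point's whole cell. -/
def IsUnionOfCells (a b : ℝ) (B : Finset ℝ) (S : Set ℝ) : Prop :=
  S ⊆ Set.Ico a b ∧
    ∀ x ∈ S, ∀ y ∈ Set.Ico a b, (∀ c ∈ B, (c ≤ x ↔ c ≤ y)) → y ∈ S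

open Classical in
private lemma unionOfCells_key (a b : ℝ) (B₁ B₂ : Finset ℝ)
    (hB₁ : (B₁ : Set ℝ) ⊆ Set.Ioo a b) (hB₂ : (B₂ : Set ℝ) ⊆ Set.Ioo a b)
    [DecidableEq ℝ] (S : Set ℝ)
    (hsat₁ : ∀ x ∈ S, ∀ y ∈ Set.Ico a b, (∀ c ∈ B₁, (c ≤ x ↔ c ≤ y)) → y ∈ S)
    (hsat₂ : ∀ x ∈ S, ∀ y ∈ Set.Ico a b, (∀ c ∈ B₂, (c ≤ x ↔ c ≤ y)) → y ∈ S) :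
    ∀ n : ℕ, ∀ x ∈ Set.Ico a b, ∀ y ∈ Set.Ico a b, x ≤ y →
      (∀ c ∈ B₁ ∩ B₂, (c ≤ x ↔ c ≤ y)) →
      ((B₁ ∪ B₂).filter (fun d => d ∈ Set.Ioc x y)).card = n →
      (x ∈ S ↔ y ∈ S) := by
  intro n
  induction n using Nat.strong_induction_on with
  | _ n IH =>
    intro x hx y hy hxy hagree hcard
    by_cases hF : ((B₁ ∪ B₂).filter (fun d => d ∈ Set.Ioc x y)) = ∅
    · have h1 : ∀ c ∈ B₁, (c ≤ x ↔ c ≤ y) := by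
        intro c hc
        constructor
        · intro h; exact h.trans hxy
        · intro h
          by_contra hcx
          push_neg at hcx
          have : c ∈ (B₁ ∪ B₂).filter (fun d => d ∈ Set.Ioc x y) :=
            Finset.mem_filter.2 ⟨Finset.mem_union_left _ hc, hcx, h⟩
          exact Finset.notMem_empty c (hF ▸ this)
      exact ⟨fun hxS => hsat₁ x hxS y hy h1,
             fun hyS => hsat₁ y hyS x hx (fun c hc => (h1 c hc).symm)⟩
    · have hFne : ((B₁ ∪ B₂).filter (fun d => d ∈ Set.Ioc x y)).Nonempty :=
        Finset.nonempty_of_ne_empty hF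
      set F := (B₁ ∪ B₂).filter (fun d => d ∈ Set.Ioc x y) with hFdef
      set c := F.min' hFne with hcdef
      have hcF : c ∈ F := F.min'_mem hFne
      obtain ⟨hcU, hcx, hcy⟩ : c ∈ B₁ ∪ B₂ ∧ x < c ∧ c ≤ y := by
        have := Finset.mem_filter.1 hcF; exact ⟨this.1, this.2.1, this.2.2⟩
      have hcab : c ∈ Set.Ioo a b := by
        rcases Finset.mem_union.1 hcU with h | h
        exacts [hB₁ h, hB₂ h]
      have hcIco : c ∈ Set.Ico a b := ⟨hcab.1.le, hcab.2⟩
      have hcnot : c ∉ B₁ ∩ B₂ := fun h =>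
        absurd ((hagree c h).2 hcy) (not_le.2 hcx)
      have step1 : x ∈ S ↔ c ∈ S := by
        rcases Finset.mem_union.1 hcU with h1c | h2c
        · have h2c : c ∉ B₂ := fun h => hcnot (Finset.mem_inter.2 ⟨h1c, h⟩)
          have hag : ∀ d ∈ B₂, (d ≤ x ↔ d ≤ c) := by
            intro d hd
            constructor
            · intro h; exact h.trans hcx.le
            · intro h
              by_contra hdx
              push_neg at hdx
              have hdF : d ∈ F :=
                Finset.mem_filter.2 ⟨Finset.mem_union_right _ hd, hdx, h.trans hcy⟩
              have hle : c ≤ d := F.min'_le d hdF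
              exact h2c ((le_antisymm h hle) ▸ hd)
          exact ⟨fun hs => hsat₂ x hs c hcIco hag,
                 fun hs => hsat₂ c hs x hx (fun d hd => (hag d hd).symm)⟩
        · have h1c : c ∉ B₁ := fun h => hcnot (Finset.mem_inter.2 ⟨h, h2c⟩)
          have hag : ∀ d ∈ B₁, (d ≤ x ↔ d ≤ c) := by
            intro d hd
            constructor
            · intro h; exact h.trans hcx.le
            · intro h
              by_contra hdx
              push_neg at hdx
              have hdF : d ∈ F :=
                Finset.mem_filter.2 ⟨Finset.mem_union_left _ hd, hdx, h.trans hcy⟩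
              have hle : c ≤ d := F.min'_le d hdF
              exact h1c ((le_antisymm h hle) ▸ hd)
          exact ⟨fun hs => hsat₁ x hs c hcIco hag,
                 fun hs => hsat₁ c hs x hx (fun d hd => (hag d hd).symm)⟩
      have hagcy : ∀ d ∈ B₁ ∩ B₂, (d ≤ c ↔ d ≤ y) := by
        intro d hd
        constructor
        · intro h; exact h.trans hcy
        · intro h
          by_contra hdc
          push_neg at hdc
          exact absurd ((hagree d hd).2 h) (not_le.2 (hcx.trans hdc))
      have hsub : ((B₁ ∪ B₂).filter (fun d => d ∈ Set.Ioc c y)) ⊆ F.erase c := by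
        intro d hd
        obtain ⟨hdU, hdc, hdy⟩ :=
          show d ∈ B₁ ∪ B₂ ∧ c < d ∧ d ≤ y by
            have := Finset.mem_filter.1 hd; exact ⟨this.1, this.2.1, this.2.2⟩
        exact Finset.mem_erase.2 ⟨(ne_of_gt hdc),
          Finset.mem_filter.2 ⟨hdU, hcx.trans hdc, hdy⟩⟩
      have hlt : ((B₁ ∪ B₂).filter (fun d => d ∈ Set.Ioc c y)).card < n := by
        calc ((B₁ ∪ B₂).filter (fun d => d ∈ Set.Ioc c y)).card
            ≤ (F.erase c).card := Finset.card_le_card hsub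
          _ < F.card := Finset.card_erase_lt_of_mem hcF
          _ = n := hcard
      exact step1.trans (IH _ hlt c hcIco y hy hcy hagcy rfl)

/-- For finite breakpoint sets `B₁, B₂ ⊆ (a, b)`, a set `S ⊆ [a, b)` is simultaneously a
union of cells of the interval partition with breakpoints `B₁` and of the one with
breakpoints `B₂` iff it is a union of cells of the interval partition with breakpoints
`B₁ ∩ B₂`.  In particular, the finest common coarsening of two finite interval partitions
of `[a, b)` is itself an interval partition, with breakpoint set `B₁ ∩ B₂`. -/
theorem unionOfCells_inter_iff (a b : ℝ) (hab : a < b) (B₁ B₂ : Finset ℝ)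
    (hB₁ : (B₁ : Set ℝ) ⊆ Set.Ioo a b) (hB₂ : (B₂ : Set ℝ) ⊆ Set.Ioo a b)
    [DecidableEq ℝ] (S : Set ℝ) :
    (IsUnionOfCells a b B₁ S ∧ IsUnionOfCells a b B₂ S) ↔
      IsUnionOfCells a b (B₁ ∩ B₂) S := by
  constructor
  · rintro ⟨⟨hS₁, hsat₁⟩, ⟨hS₂, hsat₂⟩⟩
    refine ⟨hS₁, ?_⟩
    intro x hx y hy hagree
    have hxI := hS₁ hx
    rcases le_total x y with hxy | hyx
    · exact (unionOfCells_key a b B₁ B₂ hB₁ hB₂ S hsat₁ hsat₂ _ x hxI y hy hxy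
        hagree rfl).1 hx
    · exact (unionOfCells_key a b B₁ B₂ hB₁ hB₂ S hsat₁ hsat₂ _ y hy x hxI hyx
        (fun c hc => (hagree c hc).symm) rfl).2 hx
  · rintro ⟨hS, hsat⟩
    refine ⟨⟨hS, ?_⟩, ⟨hS, ?_⟩⟩
    · intro x hx y hy hagree
      exact hsat x hx y hy (fun c hc => hagree c (Finset.mem_inter.1 hc).1)
    · intro x hx y hy hagree
      exact hsat x hx y hy (fun c hc => hagree c (Finset.mem_inter.1 hc).2)
end
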